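/- Let x : ℕ → ℕ be superadditive with x(n) ≥ 1 for all n ≥ 1, and define B_0 = 1 and B_n = ∏_{p prime, p ≤ n} p^{∑_{i ≥ 1, p^i ≤ n} x(⌊n/p^i⌋)} for n ≥ 1. Then both real numbers ∑_{n=0}^{∞} 1/B_n and ∑_{n=0}^{∞} (−1)^n/B_n are irrational. -/

import Mathlib

open Finset
set_option maxHeartbeats 1000000

lemma xmono (x : ℕ → ℕ)
    (hsuper : ∀ m n, 1 ≤ m → 1 ≤ n → x m + x n ≤ x (m + n))
    (hx : ∀ n, 1 ≤ n → 1 ≤ x n) {a b : ℕ} (ha : 1 ≤ a) (hab : a ≤ b) :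
    x a ≤ x b := by
  rcases eq_or_lt_of_le hab with rfl | h
  · rfl
  · obtain ⟨k, hk⟩ : ∃ k, b = a + (k + 1) := ⟨b - a - 1, by omega⟩
    subst hk
    have := hsuper a (k+1) ha (by omega)
    omega

lemma key_exp (x : ℕ → ℕ)
    (hsuper : ∀ m n, 1 ≤ m → 1 ≤ n → x m + x n ≤ x (m + n))
    (hx : ∀ n, 1 ≤ n → 1 ≤ x n) (n p : ℕ) (hp : p.Prime) (hn : 1 ≤ n) :
    ((n+1).factorization p) + (∑ i ∈ (Finset.Icc 1 n).filter (fun i => p ^ i ≤ n), x (n / p ^ i))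
      ≤ ∑ i ∈ (Finset.Icc 1 (n+1)).filter (fun i => p ^ i ≤ n+1), x ((n+1) / p ^ i) := by
  have hp2 := hp.two_le
  set S := (Finset.Icc 1 (n+1)).filter (fun i => p ^ i ≤ n+1) with hS
  have hipow : ∀ i : ℕ, i < 2 ^ i := fun i => Nat.lt_two_pow_self
  have hpowp : ∀ i : ℕ, 2 ^ i ≤ p ^ i := fun i => Nat.pow_le_pow_left hp2 i
  -- rewrite the old sum as a sum over S
  have h1 : (Finset.Icc 1 n).filter (fun i => p ^ i ≤ n) = S.filter (fun i => p ^ i ≤ n) := by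
    ext i
    simp only [hS, mem_filter, mem_Icc]
    constructor
    · rintro ⟨⟨h1, h2⟩, h3⟩; exact ⟨⟨⟨h1, by omega⟩, by omega⟩, h3⟩
    · rintro ⟨⟨⟨h1, h2⟩, h3⟩, h4⟩
      refine ⟨⟨h1, ?_⟩, h4⟩
      have := hipow i; have := hpowp i; omega
  -- factorization as a card
  have h2 : (n+1).factorization p = (S.filter (fun i => p ^ i ∣ n+1)).card := by
    rw [Nat.factorization_eq_card_pow_dvd (n+1) hp,
      Nat.Ico_filter_pow_dvd_eq hp (by omega) (show n+1 ≤ p ^ (n+1) by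
        have := hipow (n+1); have := hpowp (n+1); omega)]
    congr 1
    ext i
    simp only [hS, mem_filter, mem_Icc]
    constructor
    · rintro ⟨⟨h1, h2⟩, h3⟩
      exact ⟨⟨⟨h1, h2⟩, Nat.le_of_dvd (by omega) h3⟩, h3⟩
    · rintro ⟨⟨⟨h1, h2⟩, h3⟩, h4⟩; exact ⟨⟨h1, h2⟩, h4⟩
  rw [h1, h2, Finset.sum_filter, Finset.card_filter, add_comm]
  rw [← Finset.sum_add_distrib]
  apply Finset.sum_le_sum
  intro i hi
  simp only [hS, mem_filter, mem_Icc] at hi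
  obtain ⟨⟨hi1, hi2⟩, hi3⟩ := hi
  by_cases hle : p ^ i ≤ n
  · by_cases hdvd : p ^ i ∣ n + 1
    · simp only [hle, if_true, hdvd, if_true]
      obtain ⟨q, hq⟩ := hdvd
      have hd2 : 2 ≤ p ^ i := le_trans hp2 (Nat.le_self_pow (by omega) p)
      have hq2 : 2 ≤ q := by
        rcases Nat.lt_or_ge q 2 with h | h
        · interval_cases q <;> omega
        · exact h
      obtain ⟨k, rfl⟩ : ∃ k, q = k + 2 := ⟨q - 2, by omega⟩
      have e1 : (n+1) / p ^ i = k + 2 := by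
        rw [hq, Nat.mul_div_cancel_left _ (by omega)]
      have hmul : p ^ i * (k+2) = p ^ i * (k+1) + p ^ i := by ring
      have e2 : n / p ^ i = k + 1 := by
        have hn' : n = p ^ i * (k+1) + (p ^ i - 1) := by omega
        rw [hn', Nat.mul_add_div (by omega), Nat.div_eq_of_lt (by omega), add_zero]
      rw [e1, e2]
      have h1 : x (k+1) + x 1 ≤ x (k+2) := hsuper (k+1) 1 (by omega) le_rfl
      have h2 := hx 1 le_rfl
      omega
    · simp only [hle, if_true, hdvd, if_false, add_zero]
      have hd1 : 0 < p ^ i := pow_pos (by omega) i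
      exact xmono x hsuper hx ((Nat.one_le_div_iff hd1).mpr hle)
        (Nat.div_le_div_right (by omega))
  · have hpow : p ^ i = n + 1 := by omega
    have hdvd : p ^ i ∣ n + 1 := hpow ▸ dvd_refl _
    simp only [hle, if_false, hdvd, if_true, zero_add]
    rw [hpow, Nat.div_self (by omega)]
    exact hx 1 le_rfl

lemma key_dvd (x : ℕ → ℕ)
    (hsuper : ∀ m n, 1 ≤ m → 1 ≤ n → x m + x n ≤ x (m + n))
    (hx : ∀ n, 1 ≤ n → 1 ≤ x n)
    (B : ℕ → ℕ) (hB0 : B 0 = 1)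
    (hB : ∀ n, 1 ≤ n → B n =
      ∏ p ∈ (Finset.Icc 1 n).filter Nat.Prime,
        p ^ (∑ i ∈ (Finset.Icc 1 n).filter (fun i => p ^ i ≤ n), x (n / p ^ i)))
    (hexp : ∀ n p, p.Prime → 1 ≤ n →
      ((n+1).factorization p) + (∑ i ∈ (Finset.Icc 1 n).filter (fun i => p ^ i ≤ n), x (n / p ^ i))
      ≤ ∑ i ∈ (Finset.Icc 1 (n+1)).filter (fun i => p ^ i ≤ n+1), x ((n+1) / p ^ i)) :
    ∀ n, (n + 1) * B n ∣ B (n + 1) := by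
  intro n
  rcases Nat.eq_zero_or_pos n with rfl | hn
  · have h1 : B 1 = 1 := by
      rw [hB 1 le_rfl]
      simp [Finset.Icc_self, Finset.filter_singleton, Nat.not_prime_one]
    simp [hB0, h1]
  set P := (Finset.Icc 1 (n+1)).filter Nat.Prime with hP
  have hBn : B n = ∏ p ∈ P,
      p ^ (∑ i ∈ (Finset.Icc 1 n).filter (fun i => p ^ i ≤ n), x (n / p ^ i)) := by
    rw [hB n hn]
    apply Finset.prod_subset
    · intro p hp
      simp only [hP, mem_filter, mem_Icc] at hp ⊢
      exact ⟨⟨hp.1.1, by omega⟩, hp.2⟩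
    · intro p hp hnp
      simp only [hP, mem_filter, mem_Icc] at hp hnp
      have hple : ¬ p ≤ n := fun h => hnp ⟨⟨hp.1.1, h⟩, hp.2⟩
      have he : (Finset.Icc 1 n).filter (fun i => p ^ i ≤ n) = ∅ := by
        apply Finset.filter_false_of_mem
        intro i hi
        simp only [mem_Icc] at hi
        have : p ≤ p ^ i := Nat.le_self_pow (by omega) p
        omega
      simp [he]
  have hsub : (n+1).factorization.support ⊆ P := by
    intro p hp
    rw [Nat.support_factorization, Nat.mem_primeFactors] at hp
    simp only [hP, mem_filter, mem_Icc]
    exact ⟨⟨hp.1.one_lt.le.trans' (by omega), Nat.le_of_dvd (by omega) hp.2.1⟩, hp.1⟩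
  have hfact : ∏ p ∈ P, p ^ ((n+1).factorization p) = n + 1 :=
    calc ∏ p ∈ P, p ^ ((n+1).factorization p)
        = (n+1).factorization.prod (· ^ ·) :=
          (Finsupp.prod_of_support_subset _ hsub _ (by simp)).symm
      _ = n + 1 := Nat.factorization_prod_pow_eq_self (by omega)
  rw [hBn, hB (n+1) (by omega)]
  conv_lhs => rw [← hfact]
  rw [← Finset.prod_mul_distrib]
  apply Finset.prod_dvd_prod_of_dvd
  intro p hp
  simp only [hP, mem_filter, mem_Icc] at hp
  rw [← pow_add]
  exact pow_dvd_pow p (hexp n p hp.2 hn)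

lemma crit (B : ℕ → ℕ) (hpos : ∀ n, 0 < B n)
    (hdvd : ∀ n, (n + 1) * B n ∣ B (n + 1)) (ε : ℤ) (hε : ε = 1 ∨ ε = -1) :
    Irrational (∑' n : ℕ, (ε : ℝ) ^ n / B n) := by
  set f : ℕ → ℝ := fun n => (ε : ℝ) ^ n / B n with hf
  have hstep : ∀ n, (n + 1) * B n ≤ B (n + 1) := fun n => Nat.le_of_dvd (hpos _) (hdvd n)
  have hBdvd : ∀ m n : ℕ, m ≤ n → B m ∣ B n := by
    intro m n hmn
    induction n, hmn using Nat.le_induction with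
    | base => rfl
    | succ n hmn ih => exact ih.trans ((dvd_mul_left (B n) (n+1)).trans (hdvd n))
  have hgrow : ∀ N k : ℕ, B N * (N + 1) ^ k ≤ B (N + k) := by
    intro N k
    induction k with
    | zero => simp
    | succ k ih =>
      calc B N * (N+1)^(k+1) = (N+1) * (B N * (N+1)^k) := by ring
        _ ≤ (N+1) * B (N+k) := Nat.mul_le_mul_left _ ih
        _ ≤ (N+k+1) * B (N+k) := Nat.mul_le_mul_right _ (by omega)
        _ ≤ B (N+k+1) := hstep (N+k)
  have hepsabs : |(ε:ℝ)| = 1 := by rcases hε with rfl | rfl <;> norm_num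
  have habs : ∀ n, |f n| = 1 / B n := by
    intro n
    rw [hf]
    rw [abs_div, abs_pow, hepsabs, one_pow, abs_of_pos (by exact_mod_cast hpos n)]
  have hBcast : ∀ n, (1:ℝ) ≤ B n := fun n => by exact_mod_cast hpos n
  -- termwise tail bound
  have hterm : ∀ j k : ℕ, 1 ≤ j → |f (k + j)| ≤ (1 / B j) * (1/2) ^ k := by
    intro j k hj
    rw [habs]
    have h1 : B j * 2 ^ k ≤ B (k + j) := by
      calc B j * 2 ^ k ≤ B j * (j+1) ^ k :=
            Nat.mul_le_mul_left _ (Nat.pow_le_pow_left (by omega) k)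
        _ ≤ B (j + k) := hgrow j k
        _ = B (k + j) := by rw [add_comm]
    have hbj : (0:ℝ) < B j := by exact_mod_cast hpos j
    have h2 : (0:ℝ) < (B j:ℝ) * 2 ^ k := by positivity
    have h3 : ((B j * 2 ^ k : ℕ) : ℝ) ≤ B (k + j) := by exact_mod_cast h1
    push_cast at h3
    rw [show (1/((B j:ℝ)))*((1:ℝ)/2)^k = 1/((B j:ℝ)*2^k) by
      rw [div_pow, one_pow]; ring]
    exact one_div_le_one_div_of_le h2 h3
  have hbnd : ∀ n, |f n| ≤ 2 * (1/2:ℝ)^n := by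
    intro n
    rcases Nat.eq_zero_or_pos n with rfl | hn
    · rw [habs]
      simp only [pow_zero, mul_one]
      calc (1:ℝ)/B 0 ≤ 1 := by
            rw [div_le_one (by exact_mod_cast hpos 0)]; exact hBcast 0
        _ ≤ 2 := by norm_num
    · obtain ⟨k, rfl⟩ : ∃ k, n = k + 1 := ⟨n - 1, by omega⟩
      calc |f (k + 1)| ≤ (1 / B 1) * (1/2)^k := hterm 1 k le_rfl
        _ ≤ 1 * (1/2)^k := by
            apply mul_le_mul_of_nonneg_right ?_ (by positivity)
            rw [div_le_one (by exact_mod_cast hpos 1)]; exact hBcast 1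
        _ = 2 * (1/2)^(k+1) := by ring
  have hsumabs : Summable (fun n => |f n|) :=
    Summable.of_nonneg_of_le (fun n => abs_nonneg _) hbnd (summable_geometric_two.mul_left 2)
  have hsum : Summable f := hsumabs.of_abs
  have htailabs : ∀ j, 1 ≤ j → ∑' k, |f (k + j)| ≤ 2 / B j := by
    intro j hj
    have hs1 : Summable (fun k => |f (k + j)|) := (summable_nat_add_iff j).mpr hsumabs
    have hs2 : Summable (fun k : ℕ => (1 / (B j:ℝ)) * (1/2)^k) :=
      summable_geometric_two.mul_left _
    calc ∑' k, |f (k + j)| ≤ ∑' k : ℕ, (1 / (B j:ℝ)) * (1/2)^k :=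
          Summable.tsum_le_tsum (fun k => hterm j k hj) hs1 hs2
      _ = (1 / (B j:ℝ)) * 2 := by rw [tsum_mul_left, tsum_geometric_two]
      _ = 2 / B j := by ring
  have htail_le : ∀ j, 1 ≤ j → |∑' k, f (k + j)| ≤ 2 / B j := by
    intro j hj
    refine le_trans ?_ (htailabs j hj)
    have := norm_tsum_le_tsum_norm (f := fun k => f (k + j)) ?_
    · simpa [Real.norm_eq_abs] using this
    · simpa [Real.norm_eq_abs] using (summable_nat_add_iff j).mpr hsumabs
  -- now the contradiction
  rintro ⟨q, hq⟩
  set d : ℕ := q.den with hd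
  have hdpos : 0 < d := q.pos
  set N : ℕ := 2 * d + 1 with hN
  have hN3 : 3 ≤ N := by omega
  set T : ℝ := ∑' k, f (k + (N + 1)) with hT
  have hsplit : ∑ i ∈ Finset.range (N+1), f i + T = ∑' i, f i :=
    Summable.sum_add_tsum_nat_add (N+1) hsum
  -- T = f (N+1) + T₂
  have hshift : T = f (N+1) + ∑' k, f (k + (N+2)) := by
    rw [hT, Summable.tsum_eq_zero_add ((summable_nat_add_iff (N+1)).mpr hsum)]
    congr 1
    · simp
    · exact tsum_congr fun k => by rw [show k + 1 + (N+1) = k + (N+2) by omega]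
  set T2 : ℝ := ∑' k, f (k + (N+2)) with hT2
  have hb1 : (1:ℝ) ≤ B (N+1) := hBcast _
  have hb1pos : (0:ℝ) < B (N+1) := by linarith
  have hT2le : |T2| ≤ 2 / B (N+2) := htail_le (N+2) (by omega)
  have hB2ge : ((N+2:ℕ):ℝ) * B (N+1) ≤ B (N+2) := by exact_mod_cast hstep (N+1)
  have hT2le' : |T2| ≤ (2/5) * (1 / B (N+1)) := by
    have h5 : (5:ℝ) ≤ ((N+2:ℕ):ℝ) := by exact_mod_cast (by omega : 5 ≤ N+2)
    have hBpos2 : (0:ℝ) < B (N+2) := by exact_mod_cast hpos (N+2)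
    have h1 : (5:ℝ) * B (N+1) ≤ B (N+2) := le_trans (by nlinarith) hB2ge
    calc |T2| ≤ 2 / B (N+2) := hT2le
      _ ≤ 2 / (5 * B (N+1)) := by
          apply div_le_div_of_nonneg_left (by norm_num) (by positivity) h1
      _ = (2/5) * (1 / B (N+1)) := by ring
  have hfN1 : |f (N+1)| = 1 / B (N+1) := habs (N+1)
  have hTlb : (3/5) * (1 / B (N+1)) ≤ |T| := by
    have h1 : |f (N+1)| - |T2| ≤ |T| := by
      rw [hshift]
      have := abs_add_le (f (N+1) + T2) (-T2)
      have habs2 : |(-T2)| = |T2| := abs_neg T2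
      calc |f (N+1)| - |T2| = |f (N+1) + T2 + -T2| - |T2| := by
            rw [show f (N+1) + T2 + -T2 = f (N+1) by ring]
        _ ≤ (|f (N+1) + T2| + |(-T2)|) - |T2| := by linarith [abs_add_le (f (N+1) + T2) (-T2)]
        _ = |f (N+1) + T2| := by rw [habs2]; ring
    rw [hfN1] at h1
    linarith
  have hTub : |T| ≤ 2 / B (N+1) := htail_le (N+1) (by omega)
  have hTpos : 0 < |T| := lt_of_lt_of_le (by positivity) hTlb
  -- the integer
  set z : ℤ := q.num * B N - (d : ℤ) * ∑ n ∈ Finset.range (N+1), ε ^ n * ((B N / B n : ℕ) : ℤ)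
    with hz
  have hzval : (z : ℝ) = d * B N * T := by
    have hTeq : T = (q:ℝ) - ∑ i ∈ Finset.range (N+1), f i := by
      rw [hq]; linarith [hsplit]
    have hden : ((d:ℝ)) ≠ 0 := by positivity
    have hnum : (d:ℝ) * (q:ℝ) = (q.num : ℝ) := by
      rw [Rat.cast_def]
      field_simp [hd]
      rw [hd]; ring
    have hterm2 : ∀ n ∈ Finset.range (N+1), (B N : ℝ) * f n
        = (ε:ℝ)^n * ((B N / B n : ℕ) : ℝ) := by
      intro n hn
      simp only [Finset.mem_range] at hn
      have hdvdn : B n ∣ B N := hBdvd n N (by omega)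
      have hcast : ((B N / B n : ℕ) : ℝ) = (B N : ℝ) / (B n : ℝ) :=
        Nat.cast_div hdvdn (by exact_mod_cast (hpos n).ne')
      rw [hcast, hf]
      ring
    have hsum_eq : (B N:ℝ) * ∑ i ∈ Finset.range (N+1), f i
        = ∑ n ∈ Finset.range (N+1), (ε:ℝ)^n * ((B N / B n : ℕ):ℝ) := by
      rw [Finset.mul_sum]; exact Finset.sum_congr rfl hterm2
    have hzc : (z:ℝ) = (q.num:ℝ) * (B N:ℝ)
        - (d:ℝ) * ∑ n ∈ Finset.range (N+1), (ε:ℝ)^n * ((B N / B n : ℕ):ℝ) := by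
      rw [hz]; simp only [Int.cast_sub, Int.cast_mul, Int.cast_sum, Int.cast_pow, Int.cast_natCast]
    rw [hzc, ← hsum_eq, hTeq, ← hnum]
    ring
  -- bounds on z
  have hBNpos : (0:ℝ) < B N := by exact_mod_cast hpos N
  have hzne : z ≠ 0 := by
    intro h0
    have hne : (d:ℝ) * (B N:ℝ) * T ≠ 0 := by
      have hTne : T ≠ 0 := abs_pos.mp hTpos
      have hd0 : (d:ℝ) ≠ 0 := by positivity
      have hB0 : (B N:ℝ) ≠ 0 := ne_of_gt hBNpos
      exact mul_ne_zero (mul_ne_zero hd0 hB0) hTne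
    apply hne
    rw [← hzval, h0]
    norm_num
  have hzabs : (1:ℝ) ≤ |(z:ℝ)| := by
    have := Int.one_le_abs hzne
    calc (1:ℝ) = ((1:ℤ):ℝ) := by norm_num
      _ ≤ ((|z|:ℤ):ℝ) := by exact_mod_cast this
      _ = |(z:ℝ)| := by push_cast; rfl
  have hBN1 : ((N+1:ℕ):ℝ) * B N ≤ B (N+1) := by exact_mod_cast hstep N
  have hzsmall : |(z:ℝ)| < 1 := by
    rw [hzval, abs_mul, abs_mul, abs_of_nonneg (by positivity : (0:ℝ) ≤ (d:ℝ)),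
      abs_of_nonneg (le_of_lt hBNpos)]
    have h1 : (d:ℝ) * (B N:ℝ) * |T| ≤ (d:ℝ) * (B N:ℝ) * (2 / B (N+1)) := by
      apply mul_le_mul_of_nonneg_left hTub (by positivity)
    have hNc : ((N+1:ℕ):ℝ) = 2*(d:ℝ)+2 := by rw [hN]; push_cast; ring
    have hdpos' : (0:ℝ) < (d:ℝ) := by exact_mod_cast hdpos
    have key : (d:ℝ) * (B N:ℝ) * 2 < B (N+1) := by
      have : (2*(d:ℝ)+2) * (B N:ℝ) ≤ B (N+1) := by rw [← hNc]; exact hBN1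
      nlinarith
    have h2 : (d:ℝ) * (B N:ℝ) * (2 / B (N+1)) < 1 := by
      rw [show (d:ℝ) * (B N:ℝ) * (2 / B (N+1)) = ((d:ℝ) * (B N:ℝ) * 2) / B (N+1) by ring,
        div_lt_one hb1pos]
      exact key
    linarith
  linarith

theorem stmt_12 (x : ℕ → ℕ)
    (hsuper : ∀ m n, 1 ≤ m → 1 ≤ n → x m + x n ≤ x (m + n))
    (hx : ∀ n, 1 ≤ n → 1 ≤ x n)
    (B : ℕ → ℕ)
    (hB0 : B 0 = 1)
    (hB : ∀ n, 1 ≤ n → B n =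
      ∏ p ∈ (Finset.Icc 1 n).filter Nat.Prime,
        p ^ (∑ i ∈ (Finset.Icc 1 n).filter (fun i => p ^ i ≤ n), x (n / p ^ i))) :
    Irrational (∑' n : ℕ, (1 : ℝ) / B n) ∧
      Irrational (∑' n : ℕ, (-1 : ℝ) ^ n / B n) := by
  have hpos : ∀ n, 0 < B n := by
    intro n
    rcases Nat.eq_zero_or_pos n with rfl | hn
    · omega
    · rw [hB n hn]
      apply Finset.prod_pos
      intro p hp
      simp only [mem_filter] at hp
      exact pow_pos hp.2.pos _
  have hdvd : ∀ n, (n + 1) * B n ∣ B (n + 1) :=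
    key_dvd x hsuper hx B hB0 hB (fun n p hp hn => key_exp x hsuper hx n p hp hn)
  constructor
  · have h1 := crit B hpos hdvd 1 (Or.inl rfl)
    have he : (∑' n : ℕ, ((1:ℤ) : ℝ) ^ n / B n) = ∑' n : ℕ, (1 : ℝ) / B n := by
      apply tsum_congr
      intro n
      norm_num
    rwa [he] at h1
  · have h1 := crit B hpos hdvd (-1) (Or.inr rfl)
    have he : (∑' n : ℕ, ((-1:ℤ) : ℝ) ^ n / B n) = ∑' n : ℕ, (-1 : ℝ) ^ n / B n := by
      apply tsum_congr
      intro n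
      norm_num
    rwa [he] at h1
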